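/- For a ∈ F_{q^{m_1}}^* and any b ∈ F_{q^m}, the codeword c(a,b) of the code C_K has Hamming weight exactly 2nq^{m_1−1}(q−1). -/

import Mathlib

open scoped Classical

/-- The codeword `c(a,b)` of the code `C_K` with `K = F_{q^{m_1}} × D`,
`D = {ω^{hi} : 0 ≤ i < n}`:
`c(a,b) = (Tr^{m_1}_1(ax)+Tr^m_1(by) | Tr^{m_1}_1(ax)+Tr^m_1((a+b)y))_{(x,y) ∈ K}`,
indexed by `(x, i, half) ∈ E1 × Fin n × Bool` where `y = ω^{hi}`. -/
noncomputable def cword (Kq E1 E : Type*) [Field Kq] [Field E1] [Field E]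
    [Algebra Kq E1] [Algebra Kq E] [Algebra E1 E]
    (ω : E) (h n : ℕ) (a : E1) (b : E) : E1 × Fin n × Bool → Kq :=
  fun z =>
    if z.2.2 then
      Algebra.trace Kq E1 (a * z.1) + Algebra.trace Kq E (b * ω ^ (h * (z.2.1 : ℕ)))
    else
      Algebra.trace Kq E1 (a * z.1) +
        Algebra.trace Kq E ((algebraMap E1 E a + b) * ω ^ (h * (z.2.1 : ℕ)))

open Finset in
lemma fiber_card_eq (Kq E1 : Type*) [Field Kq] [Fintype Kq] [DecidableEq Kq]
    [Field E1] [Fintype E1] [Algebra Kq E1] (a : E1) (ha : a ≠ 0) (v w : Kq) :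
    #{x : E1 | Algebra.trace Kq E1 (a * x) = v} =
    #{x : E1 | Algebra.trace Kq E1 (a * x) = w} := by
  have hsurj : Function.Surjective (Algebra.trace Kq E1) := Algebra.trace_surjective Kq E1
  obtain ⟨yv, hyv⟩ := hsurj v
  obtain ⟨yw, hyw⟩ := hsurj w
  apply Finset.card_bij (fun x _ => x - a⁻¹ * yv + a⁻¹ * yw)
  · intro x hx
    simp only [mem_filter, mem_univ, true_and] at hx ⊢
    have h : a * (x - a⁻¹ * yv + a⁻¹ * yw) = a * x - yv + yw := by
      field_simp
    rw [h, map_add, map_sub, hx, hyv, hyw]; ring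
  · intro x hx y hy hxy
    simpa using hxy
  · intro x hx
    refine ⟨x + a⁻¹ * yv - a⁻¹ * yw, ?_, by ring⟩
    simp only [mem_filter, mem_univ, true_and] at hx ⊢
    have h : a * (x + a⁻¹ * yv - a⁻¹ * yw) = a * x + yv - yw := by
      field_simp
    rw [h, map_sub, map_add, hx, hyv, hyw]; ring

open Finset in
lemma fiber_card (Kq E1 : Type*) [Field Kq] [Fintype Kq] [DecidableEq Kq]
    [Field E1] [Fintype E1] [Algebra Kq E1] (a : E1) (ha : a ≠ 0) (v : Kq) :
    #{x : E1 | Algebra.trace Kq E1 (a * x) = v} * Fintype.card Kq = Fintype.card E1 := by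
  have h1 : Fintype.card E1 =
      ∑ w : Kq, #{x : E1 | Algebra.trace Kq E1 (a * x) = w} := by
    rw [← Finset.card_univ]
    exact Finset.card_eq_sum_card_fiberwise (fun x _ => Finset.mem_univ _)
  rw [h1, Finset.sum_congr rfl (fun w _ => fiber_card_eq Kq E1 a ha w v),
    Finset.sum_const, Finset.card_univ, smul_eq_mul, mul_comm]

open Finset in
lemma count_ne (q m1 : ℕ) (Kq E1 : Type*) [Field Kq] [Fintype Kq] [DecidableEq Kq]
    [Field E1] [Fintype E1] [Algebra Kq E1]
    (hq : q = Fintype.card Kq) (hc1 : Fintype.card E1 = q ^ m1)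
    (a : E1) (ha : a ≠ 0) (c : Kq) :
    #{x : E1 | Algebra.trace Kq E1 (a * x) + c ≠ 0} = q ^ (m1 - 1) * (q - 1) := by
  have hq1 : 1 < q := hq ▸ Fintype.one_lt_card
  have hm1 : 1 ≤ m1 := by
    rcases Nat.eq_zero_or_pos m1 with h0 | h0
    · exfalso
      have h2 := Fintype.one_lt_card (α := E1)
      rw [hc1, h0, pow_zero] at h2; omega
    · omega
  have hN : #{x : E1 | Algebra.trace Kq E1 (a * x) = -c} = q ^ (m1 - 1) := by
    have h1 := fiber_card Kq E1 a ha (-c)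
    rw [hc1, ← hq] at h1
    have h2 : q ^ m1 = q ^ (m1 - 1) * q := by
      rw [← pow_succ]; congr 1; omega
    rw [h2] at h1
    exact Nat.eq_of_mul_eq_mul_right (by omega) h1
  have heq : Finset.univ.filter (fun x : E1 => Algebra.trace Kq E1 (a * x) + c ≠ 0) =
      Finset.univ \ Finset.univ.filter (fun x : E1 => Algebra.trace Kq E1 (a * x) = -c) := by
    ext x
    simp only [mem_filter, mem_univ, true_and, mem_sdiff]
    constructor
    · intro h h2; exact h (by rw [h2]; ring)
    · intro h h2; exact h (by linear_combination h2)
  rw [show ({x : E1 | Algebra.trace Kq E1 (a * x) + c ≠ 0} : Finset E1) =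
      Finset.univ.filter (fun x : E1 => Algebra.trace Kq E1 (a * x) + c ≠ 0) from rfl,
    heq, Finset.card_sdiff_of_subset (Finset.filter_subset _ _)]
  rw [show Finset.univ.filter (fun x : E1 => Algebra.trace Kq E1 (a * x) = -c) =
      ({x : E1 | Algebra.trace Kq E1 (a * x) = -c} : Finset E1) from rfl, hN,
    Finset.card_univ, hc1]
  have h2 : q ^ m1 = q ^ (m1 - 1) * q := by rw [← pow_succ]; congr 1; omega
  rw [h2, Nat.mul_sub_one]

/-- For `a ∈ F_{q^{m_1}}^*` and any `b ∈ F_{q^m}`, the codeword `c(a,b)` has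
Hamming weight exactly `2nq^{m_1−1}(q−1)`. -/
theorem stmt7 (q m m1 h n : ℕ) (Kq E1 E : Type*)
    [Field Kq] [Fintype Kq] [DecidableEq Kq]
    [Field E1] [Fintype E1] [Field E] [Fintype E]
    [Algebra Kq E1] [Algebra Kq E] [Algebra E1 E] [IsScalarTower Kq E1 E]
    (hq : q = Fintype.card Kq) (hqodd : Odd q)
    (hm1 : m1 ∣ m) (hc1 : Fintype.card E1 = q ^ m1) (hc : Fintype.card E = q ^ m)
    (ω : E) (hω : ∀ x : E, x ≠ 0 → ∃ k : ℕ, x = ω ^ k)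
    (hh0 : 0 < h) (hh : h ∣ (q ^ m - 1) / (q - 1))
    (hn0 : 0 < n) (hn : (q ^ m - 1) / (h * (q - 1)) ∣ n)
    (hnh : n * (q - 1) * h ≤ q ^ m - 1) :
    ∀ a : E1, a ≠ 0 → ∀ b : E,
      hammingNorm (cword Kq E1 E ω h n a b) = 2 * n * q ^ (m1 - 1) * (q - 1) := by
  intro a ha b
  classical
  set c : Fin n × Bool → Kq := fun w =>
    if w.2 then Algebra.trace Kq E (b * ω ^ (h * (w.1 : ℕ)))
    else Algebra.trace Kq E ((algebraMap E1 E a + b) * ω ^ (h * (w.1 : ℕ))) with hcdef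
  have hcw : ∀ z : E1 × Fin n × Bool,
      cword Kq E1 E ω h n a b z = Algebra.trace Kq E1 (a * z.1) + c z.2 := by
    rintro ⟨x, i, half⟩
    cases half <;> simp [cword, hcdef]
  have key : ∀ w : Fin n × Bool,
      (Finset.univ.filter fun x : E1 => Algebra.trace Kq E1 (a * x) + c w ≠ 0).card
        = q ^ (m1 - 1) * (q - 1) := fun w => count_ne q m1 Kq E1 hq hc1 a ha (c w)
  unfold hammingNorm
  have hfc : (Finset.univ.filter fun z : E1 × Fin n × Bool =>
        cword Kq E1 E ω h n a b z ≠ 0) =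
      Finset.univ.filter fun z : E1 × Fin n × Bool =>
        Algebra.trace Kq E1 (a * z.1) + c z.2 ≠ 0 := by
    apply Finset.filter_congr
    intro z _
    rw [hcw z]
  rw [show ({i | cword Kq E1 E ω h n a b i ≠ 0} : Finset (E1 × Fin n × Bool)) =
      Finset.univ.filter (fun z : E1 × Fin n × Bool =>
        cword Kq E1 E ω h n a b z ≠ 0) from rfl, hfc]
  rw [Finset.card_filter]
  rw [Fintype.sum_prod_type]
  rw [Finset.sum_comm]
  have : ∀ w : Fin n × Bool,
      (∑ x : E1, if Algebra.trace Kq E1 (a * x) + c w ≠ 0 then 1 else 0)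
        = q ^ (m1 - 1) * (q - 1) := by
    intro w
    rw [← Finset.card_filter]
    exact key w
  rw [Finset.sum_congr rfl (fun w _ => this w), Finset.sum_const, smul_eq_mul,
    Finset.card_univ, Fintype.card_prod, Fintype.card_fin, Fintype.card_bool]
  ring
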